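/- Let A be a (possibly noncommutative) ℚ(q)-algebra and let x, y ∈ A be nilpotent elements (so all exponential series are finite sums) satisfying xy = q^2 yx. Then exp_q(x+y) = exp_q(y) · exp_q(x). -/
import Mathlib


/-- `(n)_q = (q^(2n) - 1)/(q^2 - 1)`. -/
noncomputable def qNum {K : Type*} [Field K] (q : K) (n : ℕ) : K :=
  (q ^ (2 * n) - 1) / (q ^ 2 - 1)

/-- `(n)_q!`. -/
noncomputable def qFact {K : Type*} [Field K] (q : K) (n : ℕ) : K :=
  ∏ k ∈ Finset.Icc 1 n, qNum q k

set_option linter.unusedVariables false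
set_option linter.unnecessarySeqFocus false

section Aux

variable {K : Type*} [Field K] {A : Type*} [Ring A] [Algebra K A]

lemma qFact_zero (q : K) : qFact q 0 = 1 := by simp [qFact]

lemma qFact_succ (q : K) (n : ℕ) : qFact q (n + 1) = qFact q n * qNum q (n + 1) :=
  Finset.prod_Icc_succ_top (Nat.le_add_left 1 n) _

lemma qNum_zero (q : K) : qNum q 0 = 0 := by simp [qNum]

lemma qFact_ne_zero (q : K) (hgen : ∀ n : ℕ, 1 ≤ n → qNum q n ≠ 0) (n : ℕ) :
    qFact q n ≠ 0 :=
  Finset.prod_ne_zero_iff.mpr fun k hk => hgen k (Finset.mem_Icc.mp hk).1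

lemma qD_ne_zero (q : K) (hgen : ∀ n : ℕ, 1 ≤ n → qNum q n ≠ 0) :
    q ^ 2 - 1 ≠ 0 := by
  intro h
  apply hgen 1 le_rfl
  have h2 : q ^ (2 * 1) - 1 = 0 := by norm_num; linear_combination h
  rw [qNum, h2, zero_div]

lemma qNum_add (q : K) (hD : q ^ 2 - 1 ≠ 0) (k m : ℕ) :
    qNum q (k + m) = qNum q k + q ^ (2 * k) * qNum q m := by
  rw [qNum, qNum, qNum]
  field_simp
  ring

lemma x_mul_ypow (q : K) (x y : A) (hcomm : x * y = q ^ 2 • (y * x)) (k : ℕ) :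
    x * y ^ k = q ^ (2 * k) • (y ^ k * x) := by
  induction k with
  | zero => simp
  | succ k ih =>
    rw [pow_succ, ← mul_assoc, ih, smul_mul_assoc, mul_assoc, hcomm,
      mul_smul_comm, smul_smul, ← mul_assoc, ← pow_succ, ← pow_add]
    ring_nf

end Aux

section Main
variable {K : Type*} [Field K] {A : Type*} [Ring A] [Algebra K A]

lemma qexp_expand (q : K) (hgen : ∀ n : ℕ, 1 ≤ n → qNum q n ≠ 0)
    (x y : A) (hcomm : x * y = q ^ 2 • (y * x)) (n : ℕ) :
    (qFact q n)⁻¹ • (x + y) ^ n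
      = ∑ k ∈ Finset.range (n + 1),
          ((qFact q k)⁻¹ * (qFact q (n - k))⁻¹) • (y ^ k * x ^ (n - k)) := by
  induction n with
  | zero => simp [qFact_zero]
  | succ n ih =>
    have hD := qD_ne_zero q hgen
    have hne : qNum q (n + 1) ≠ 0 := hgen (n + 1) (Nat.le_add_left 1 n)
    -- step 1: multiply ih by (x+y)
    have h1 : (qFact q n)⁻¹ • (x + y) ^ (n + 1)
        = ∑ k ∈ Finset.range (n + 1),
            (q ^ (2 * k) * ((qFact q k)⁻¹ * (qFact q (n - k))⁻¹)) •
              (y ^ k * x ^ (n + 1 - k))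
          + ∑ k ∈ Finset.range (n + 1),
            ((qFact q k)⁻¹ * (qFact q (n - k))⁻¹) • (y ^ (k + 1) * x ^ (n - k)) := by
      have : (qFact q n)⁻¹ • (x + y) ^ (n + 1)
          = (x + y) * ((qFact q n)⁻¹ • (x + y) ^ n) := by
        rw [mul_smul_comm, ← pow_succ']
      rw [this, ih, Finset.mul_sum, ← Finset.sum_add_distrib]
      refine Finset.sum_congr rfl fun k hk => ?_
      have hkn : k ≤ n := Nat.lt_succ_iff.mp (Finset.mem_range.mp hk)
      rw [mul_smul_comm, add_mul, smul_add]
      congr 1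
      · rw [← mul_assoc, x_mul_ypow q x y hcomm k, smul_mul_assoc, smul_smul,
          mul_assoc (y ^ k), ← pow_succ', show n + 1 - k = n - k + 1 by omega]
        congr 1
        ring
      · rw [← mul_assoc, ← pow_succ']
    -- step 2: the target sum times qNum (n+1)
    have h2 : qNum q (n + 1) • ∑ k ∈ Finset.range (n + 2),
          ((qFact q k)⁻¹ * (qFact q (n + 1 - k))⁻¹) • (y ^ k * x ^ (n + 1 - k))
        = ∑ k ∈ Finset.range (n + 1),
            (q ^ (2 * k) * ((qFact q k)⁻¹ * (qFact q (n - k))⁻¹)) •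
              (y ^ k * x ^ (n + 1 - k))
          + ∑ k ∈ Finset.range (n + 1),
            ((qFact q k)⁻¹ * (qFact q (n - k))⁻¹) • (y ^ (k + 1) * x ^ (n - k)) := by
      rw [Finset.smul_sum]
      have hsplit : ∀ k ∈ Finset.range (n + 2),
          qNum q (n + 1) • (((qFact q k)⁻¹ * (qFact q (n + 1 - k))⁻¹) •
              (y ^ k * x ^ (n + 1 - k)))
          = (q ^ (2 * k) * (qNum q (n + 1 - k) * ((qFact q k)⁻¹ * (qFact q (n + 1 - k))⁻¹))) •
              (y ^ k * x ^ (n + 1 - k))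
            + (qNum q k * ((qFact q k)⁻¹ * (qFact q (n + 1 - k))⁻¹)) •
              (y ^ k * x ^ (n + 1 - k)) := by
        intro k hk
        have hkn : k ≤ n + 1 := Nat.lt_succ_iff.mp (Finset.mem_range.mp hk)
        have : qNum q (n + 1) = qNum q k + q ^ (2 * k) * qNum q (n + 1 - k) := by
          conv_lhs => rw [← Nat.add_sub_cancel' hkn]
          exact qNum_add q hD k (n + 1 - k)
        rw [smul_smul, this]
        rw [← add_smul]
        ring_nf
      rw [Finset.sum_congr rfl hsplit, Finset.sum_add_distrib]
      congr 1
      · -- top term (k = n+1) vanishes: qNum 0 = 0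
        rw [Finset.sum_range_succ]
        simp only [Nat.sub_self, qNum_zero, zero_mul, mul_zero, zero_smul, add_zero]
        refine Finset.sum_congr rfl fun k hk => ?_
        have hkn : k ≤ n := Nat.lt_succ_iff.mp (Finset.mem_range.mp hk)
        have hnk : n + 1 - k = (n - k) + 1 := by omega
        have hfs : qNum q (n - k + 1) * (qFact q (n - k + 1))⁻¹ = (qFact q (n - k))⁻¹ := by
          rw [qFact_succ, mul_inv, ← mul_assoc, mul_comm (qNum q (n - k + 1)),
            mul_assoc, mul_inv_cancel₀ (hgen _ (Nat.le_add_left 1 (n - k))), mul_one]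
        rw [hnk, ← mul_assoc (qNum q (n - k + 1)), mul_comm (qNum q (n - k + 1)),
          mul_assoc, hfs]
      · -- bottom term (k = 0) vanishes: qNum 0 = 0
        rw [Finset.sum_range_succ']
        simp only [qNum_zero, zero_mul, zero_smul, add_zero]
        refine Finset.sum_congr rfl fun k hk => ?_
        have hfs : qNum q (k + 1) * (qFact q (k + 1))⁻¹ = (qFact q k)⁻¹ := by
          rw [qFact_succ, mul_inv, ← mul_assoc, mul_comm (qNum q (k + 1)),
            mul_assoc, mul_inv_cancel₀ (hgen _ (Nat.le_add_left 1 k)), mul_one]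
        have hnk : n + 1 - (k + 1) = n - k := by omega
        rw [hnk, ← mul_assoc, hfs]
    -- combine
    have h3 := h1.trans h2.symm
    have := congrArg (fun z => (qNum q (n + 1))⁻¹ • z) h3
    simp only [smul_smul] at this
    rw [inv_mul_cancel₀ hne, one_smul] at this
    rw [qFact_succ, mul_inv, mul_comm ((qFact q n)⁻¹)]
    exact this

end Main


/-- The truncated `q`-exponential `Σ_{n < N} x^n/(n)_q!`; for `x` nilpotent with
`x^N = 0` this equals the full `q`-exponential series. -/
noncomputable def qExpTrunc {K : Type*} [Field K] {A : Type*} [Ring A] [Algebra K A]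
    (q : K) (N : ℕ) (x : A) : A :=
  ∑ n ∈ Finset.range N, (qFact q n)⁻¹ • x ^ n

/-- if `x, y` are nilpotent (say `x^N = y^N = 0`) and `x*y = q^2 • (y*x)`,
then `exp_q(x + y) = exp_q(y) * exp_q(x)` (all exponentials being finite sums; since
`(x+y)^{2N} = 0`, truncating at `2N` resp. `N` captures the full series). -/
theorem qexp_add {K : Type*} [Field K] {A : Type*} [Ring A] [Algebra K A]
    (q : K) (hq : q ≠ 0) (hgen : ∀ n : ℕ, 1 ≤ n → qNum q n ≠ 0)
    (x y : A) (N : ℕ) (hx : x ^ N = 0) (hy : y ^ N = 0)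
    (hcomm : x * y = q ^ 2 • (y * x)) :
    qExpTrunc q (2 * N) (x + y) = qExpTrunc q N y * qExpTrunc q N x := by
  set d : ℕ → ℕ → A := fun a b =>
    ((qFact q a)⁻¹ * (qFact q b)⁻¹) • (y ^ a * x ^ b) with hd
  have hd0 : ∀ a b : ℕ, N ≤ a ∨ N ≤ b → d a b = 0 := by
    intro a b hab
    rcases hab with h | h
    · have : y ^ a = 0 := by
        rw [← Nat.add_sub_cancel' h, pow_add, hy, zero_mul]
      simp [hd, this]
    · have : x ^ b = 0 := by
        rw [← Nat.add_sub_cancel' h, pow_add, hx, zero_mul]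
      simp [hd, this]
  have hL : qExpTrunc q (2 * N) (x + y)
      = ∑ n ∈ Finset.range (2 * N), ∑ k ∈ Finset.range (n + 1), d k (n - k) := by
    unfold qExpTrunc
    exact Finset.sum_congr rfl fun n _ => qexp_expand q hgen x y hcomm n
  have hR : qExpTrunc q N y * qExpTrunc q N x
      = ∑ a ∈ Finset.range N, ∑ b ∈ Finset.range N, d a b := by
    unfold qExpTrunc
    rw [Finset.sum_mul_sum]
    exact Finset.sum_congr rfl fun a _ => Finset.sum_congr rfl fun b _ =>
      smul_mul_smul_comm _ _ _ _
  rw [hL, hR]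
  rw [Finset.sum_sigma']
  rw [← Finset.sum_product' (Finset.range N) (Finset.range N) d]
  set P : Finset (ℕ × ℕ) :=
    (Finset.range (2 * N) ×ˢ Finset.range (2 * N)).filter
      (fun p => p.1 + p.2 < 2 * N) with hP
  have step1 : ∑ p ∈ (Finset.range (2 * N)).sigma (fun n => Finset.range (n + 1)),
      d p.snd (p.fst - p.snd) = ∑ p ∈ P, d p.1 p.2 := by
    refine Finset.sum_bij' (fun p _ => (p.snd, p.fst - p.snd))
      (fun p _ => ⟨p.1 + p.2, p.1⟩) ?_ ?_ ?_ ?_ ?_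
    · intro a ha
      simp only [Finset.mem_sigma, Finset.mem_range] at ha
      simp only [hP, Finset.mem_filter, Finset.mem_product, Finset.mem_range]
      omega
    · intro a ha
      simp only [hP, Finset.mem_filter, Finset.mem_product, Finset.mem_range] at ha
      simp only [Finset.mem_sigma, Finset.mem_range]
      omega
    · intro a ha
      simp only [Finset.mem_sigma, Finset.mem_range] at ha
      simp only []
      congr 1 <;> omega
    · intro a ha
      simp
    · intro a ha
      rfl
  rw [step1]
  have step2 : ∑ p ∈ P, d p.1 p.2
      = ∑ p ∈ Finset.range N ×ˢ Finset.range N, d p.1 p.2 := by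
    refine (Finset.sum_subset ?_ ?_).symm
    · intro p hp
      simp only [Finset.mem_product, Finset.mem_range] at hp
      simp only [hP, Finset.mem_filter, Finset.mem_product, Finset.mem_range]
      omega
    · intro p hp hnp
      simp only [hP, Finset.mem_filter, Finset.mem_product, Finset.mem_range] at hp
      simp only [Finset.mem_product, Finset.mem_range] at hnp
      exact hd0 p.1 p.2 (by omega)
  rw [step2]
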